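/- arXiv:2010.06551 — 8 statements merged into one kernel-verified Lean document; each statement's English description precedes it below -/
import Mathlib

section
/- Let E be a real normed vector space, let U ⊆ E be a convex set, and let f : U → ℝ be any function. Then the Lipschitz constant of f on U equals the supremum of the local Lipschitz constants: L_f(U) = sup_{x ∈ U} L_f(x), as elements of [0,∞]. -/
open Metric NNReal

/-- The Lipschitz constant of `f` on a set `K`, valued in `[0,∞]`. -/
noncomputable def lipConstOn {X Y : Type*} [MetricSpace X] [MetricSpace Y]
    (f : X → Y) (K : Set X) : ENNReal :=
  sInf { L : ENNReal | ∀ x ∈ K, ∀ y ∈ K, edist (f x) (f y) ≤ L * edist x y }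

/-- The local Lipschitz constant at `x` of a map `f` defined on the domain `D`:
the limit (infimum) as `r → 0` of the Lipschitz constants of `f` on `B(x,r) ∩ D`. -/
noncomputable def locLipConstOn {X Y : Type*} [MetricSpace X] [MetricSpace Y]
    (f : X → Y) (D : Set X) (x : X) : ENNReal :=
  ⨅ (r : ℝ) (_ : 0 < r), lipConstOn f (ball x r ∩ D)

lemma lipConstOn_spec {X Y : Type*} [MetricSpace X] [MetricSpace Y]
    (f : X → Y) (K : Set X) {x y : X} (hx : x ∈ K) (hy : y ∈ K) :
    edist (f x) (f y) ≤ lipConstOn f K * edist x y := by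
  rcases eq_or_ne x y with rfl | hxy
  · simp
  have he0 : edist x y ≠ 0 := by simpa [edist_eq_zero] using hxy
  have het : edist x y ≠ ⊤ := edist_ne_top x y
  rw [← ENNReal.div_le_iff_le_mul (Or.inl he0) (Or.inl het)]
  refine le_sInf fun L hL => ?_
  rw [ENNReal.div_le_iff_le_mul (Or.inl he0) (Or.inl het)]
  exact hL x hx y hy

lemma lipConstOn_mono {X Y : Type*} [MetricSpace X] [MetricSpace Y]
    (f : X → Y) {K K' : Set X} (h : K ⊆ K') : lipConstOn f K ≤ lipConstOn f K' :=
  sInf_le_sInf fun _ hL x hx y hy => hL x (h hx) y (h hy)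

lemma key {E : Type*} [NormedAddCommGroup E] [NormedSpace ℝ E]
    {U : Set E} (hU : Convex ℝ U) {f : E → ℝ} {C : ℝ≥0}
    (h : ∀ z ∈ U, ∃ r > 0, LipschitzOnWith C f (ball z r ∩ U))
    {x y : E} (hx : x ∈ U) (hy : y ∈ U) :
    dist (f y) (f x) ≤ C * dist y x := by
  rcases eq_or_ne y x with rfl | hne
  · simp
  set n : ℝ := ‖y - x‖ with hn
  have hnpos : 0 < n := by simpa [hn, sub_eq_zero] using hne
  set γ : ℝ → E := fun t => x + t • (y - x) with hγ
  have hγ0 : γ 0 = x := by simp [hγ]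
  have hγ1 : γ 1 = y := by simp [hγ]
  have hγU : ∀ t ∈ Set.Icc (0:ℝ) 1, γ t ∈ U := by
    intro t ht
    have h1 : (0:ℝ) ≤ 1 - t := by linarith [ht.2]
    have := hU hx hy h1 ht.1 (by ring)
    convert this using 1
    simp only [hγ]; module
  have hγdist : ∀ s t : ℝ, dist (γ s) (γ t) = |s - t| * n := by
    intro s t
    rw [dist_eq_norm]
    have : γ s - γ t = (s - t) • (y - x) := by simp [hγ]; module
    rw [this, norm_smul, Real.norm_eq_abs]
  set S : Set ℝ := {t | t ∈ Set.Icc (0:ℝ) 1 ∧ dist (f (γ t)) (f (γ 0)) ≤ C * (t * n)} with hS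
  have h0S : (0:ℝ) ∈ S := by constructor <;> simp
  have hSne : S.Nonempty := ⟨0, h0S⟩
  have hSbdd : BddAbove S := ⟨1, fun t ht => ht.1.2⟩
  set a : ℝ := sSup S with ha
  have ha0 : 0 ≤ a := le_csSup hSbdd h0S
  have ha1 : a ≤ 1 := csSup_le hSne fun t ht => ht.1.2
  have haU : γ a ∈ U := hγU a ⟨ha0, ha1⟩
  obtain ⟨r, hr, hlip⟩ := h (γ a) haU
  have hlip' := lipschitzOnWith_iff_dist_le_mul.1 hlip
  -- a ∈ S
  have haS : a ∈ S := by
    obtain ⟨s, hsS, hs⟩ := exists_lt_of_lt_csSup hSne (sub_lt_self a (div_pos hr hnpos))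
    have hsa : s ≤ a := le_csSup hSbdd hsS
    have hd : dist (γ s) (γ a) < r := by
      rw [hγdist, abs_sub_comm, abs_of_nonneg (by linarith)]
      have h2 : a - s < r / n := by linarith
      calc (a - s) * n < (r / n) * n := mul_lt_mul_of_pos_right h2 hnpos
        _ = r := by field_simp
    have hsball : γ s ∈ ball (γ a) r ∩ U := ⟨by simpa [mem_ball] using hd, hγU s ⟨hsS.1.1, hsS.1.2⟩⟩
    have haball : γ a ∈ ball (γ a) r ∩ U := ⟨mem_ball_self hr, haU⟩
    refine ⟨⟨ha0, ha1⟩, ?_⟩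
    calc dist (f (γ a)) (f (γ 0)) ≤ dist (f (γ a)) (f (γ s)) + dist (f (γ s)) (f (γ 0)) :=
          dist_triangle _ _ _
      _ ≤ C * dist (γ a) (γ s) + C * (s * n) := add_le_add (hlip' _ haball _ hsball) hsS.2
      _ = C * ((a - s) * n) + C * (s * n) := by
            rw [dist_comm, hγdist, abs_sub_comm, abs_of_nonneg (by linarith)]
      _ = C * (a * n) := by ring
  -- a = 1
  have ha_eq : a = 1 := by
    by_contra hne1
    have ha1' : a < 1 := lt_of_le_of_ne ha1 hne1
    set t : ℝ := min 1 (a + r / (2 * n)) with ht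
    have htgt : a < t := lt_min ha1' (lt_add_of_pos_right a (by positivity))
    have htle : t ≤ 1 := min_le_left _ _
    have ht0 : 0 ≤ t := le_trans ha0 htgt.le
    have htd : t - a < r / n := by
      have : t ≤ a + r / (2 * n) := min_le_right _ _
      have h2 : r / (2 * n) < r / n := by
        rw [div_lt_div_iff₀ (by positivity) hnpos]; nlinarith
      linarith
    have hd : dist (γ t) (γ a) < r := by
      rw [hγdist, abs_of_nonneg (by linarith)]
      calc (t - a) * n < (r / n) * n := mul_lt_mul_of_pos_right htd hnpos
        _ = r := by field_simp
    have htball : γ t ∈ ball (γ a) r ∩ U := ⟨by simpa [mem_ball] using hd, hγU t ⟨ht0, htle⟩⟩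
    have haball : γ a ∈ ball (γ a) r ∩ U := ⟨mem_ball_self hr, haU⟩
    have htS : t ∈ S := by
      refine ⟨⟨ht0, htle⟩, ?_⟩
      calc dist (f (γ t)) (f (γ 0)) ≤ dist (f (γ t)) (f (γ a)) + dist (f (γ a)) (f (γ 0)) :=
            dist_triangle _ _ _
        _ ≤ C * dist (γ t) (γ a) + C * (a * n) := add_le_add (hlip' _ htball _ haball) haS.2
        _ = C * ((t - a) * n) + C * (a * n) := by rw [hγdist, abs_of_nonneg (by linarith)]
        _ = C * (t * n) := by ring
    exact absurd (le_csSup hSbdd htS) (not_le.2 htgt)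
  have := haS.2
  rw [ha_eq] at this
  simpa [hγ0, hγ1, dist_eq_norm, hn] using this

/-- for a convex subset `U` of a real normed vector space and any
function `f : U → ℝ`, the Lipschitz constant of `f` on `U` equals the supremum
over `x ∈ U` of the local Lipschitz constants, in `[0,∞]`. -/
theorem lipConstOn_eq_iSup_locLipConst {E : Type*} [NormedAddCommGroup E]
    [NormedSpace ℝ E] (U : Set E) (hU : Convex ℝ U) (f : E → ℝ) :
    lipConstOn f U = ⨆ x ∈ U, locLipConstOn f U x := by
  apply le_antisymm
  · set M := ⨆ x ∈ U, locLipConstOn f U x with hM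
    -- key claim: for C : ℝ≥0 with M < C, f is LipschitzOnWith C on U
    have main : ∀ C : ℝ≥0, M < C → ∀ x ∈ U, ∀ y ∈ U,
        edist (f x) (f y) ≤ C * edist x y := by
      intro C hC x hx y hy
      have h : ∀ z ∈ U, ∃ r > 0, LipschitzOnWith C f (ball z r ∩ U) := by
        intro z hz
        have hloc : locLipConstOn f U z < C :=
          lt_of_le_of_lt (le_iSup₂_of_le z hz le_rfl) hC
        rw [locLipConstOn, iInf_lt_iff] at hloc
        obtain ⟨r, hr⟩ := hloc
        rw [iInf_lt_iff] at hr
        obtain ⟨hrpos, hrlt⟩ := hr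
        refine ⟨r, hrpos, fun a ha b hb => ?_⟩
        calc edist (f a) (f b) ≤ lipConstOn f (ball z r ∩ U) * edist a b :=
              lipConstOn_spec f _ ha hb
          _ ≤ C * edist a b := mul_le_mul_left hrlt.le _
      exact (lipschitzOnWith_iff_dist_le_mul.2 (fun a ha b hb => key hU h hb ha)) hx hy
    refine sInf_le fun x hx y hy => ?_
    rcases eq_or_ne x y with rfl | hxy
    · simp
    have he0 : edist x y ≠ 0 := by simpa [edist_eq_zero] using hxy
    have het : edist x y ≠ ⊤ := edist_ne_top x y
    rcases eq_or_ne M ⊤ with hMt | hMt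
    · rw [hMt, ENNReal.top_mul he0]; exact le_top
    rw [← ENNReal.div_le_iff_le_mul (Or.inl he0) (Or.inl het)]
    by_contra hlt
    push_neg at hlt
    obtain ⟨C, hMC, hCd⟩ := ENNReal.lt_iff_exists_nnreal_btwn.1 hlt
    have h1 : edist (f x) (f y) / edist x y ≤ C := by
      rw [ENNReal.div_le_iff_le_mul (Or.inl he0) (Or.inl het)]
      exact main C hMC x hx y hy
    exact absurd (lt_of_lt_of_le hCd h1) (lt_irrefl _)
  · refine iSup₂_le fun x hx => ?_
    refine le_trans (iInf₂_le 1 one_pos) (lipConstOn_mono f Set.inter_subset_right)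
end

section
/- Let p > 2 be a real number and let e_p, e be real numbers with 0 ≤ e_p ≤ e ≤ 1. Then e_p^{p−2} (e² − e_p²) < 2/(p−2). -/
/-- Lemma 5.6 of the paper: if `p > 2` and `0 ≤ e_p ≤ e ≤ 1`,
then `e_p ^ (p - 2) * (e ^ 2 - e_p ^ 2) < 2 / (p - 2)` (real powers). -/
theorem rpow_concentration_ineq (p ep e : ℝ) (hp : 2 < p)
    (h0 : 0 ≤ ep) (h1 : ep ≤ e) (h2 : e ≤ 1) :
    ep ^ (p - 2) * (e ^ 2 - ep ^ 2) < 2 / (p - 2) := by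
  have hp2 : 0 < p - 2 := by linarith
  rcases eq_or_lt_of_le h0 with h | h
  · rw [← h, Real.zero_rpow (by positivity : p - 2 ≠ 0), zero_mul]
    positivity
  · have hep1 : ep ≤ 1 := h1.trans h2
    have hlog : Real.log ep ≤ 0 := Real.log_nonpos h.le hep1
    set L : ℝ := -Real.log ep with hL
    have hL0 : 0 ≤ L := neg_nonneg.mpr hlog
    have hrpow : ep ^ (p - 2) = Real.exp (-((p - 2) * L)) := by
      rw [Real.rpow_def_of_pos h, hL]; ring_nf
    have h1t : 1 - ep ≤ L := by
      have := Real.log_le_sub_one_of_pos h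
      simp only [hL]; linarith
    have he0 : 0 ≤ e := h0.trans h1
    have hsq : e ^ 2 - ep ^ 2 ≤ 2 * L := by nlinarith
    set x : ℝ := (p - 2) * L with hx
    have hx0 : 0 ≤ x := by positivity
    have hAE : Real.exp (-x) * Real.exp x = 1 := by
      rw [← Real.exp_add]; simp
    have key : x * Real.exp (-x) < 1 := by
      nlinarith [Real.add_one_le_exp x, Real.exp_pos (-x), Real.exp_pos x]
    rw [hrpow, lt_div_iff₀ hp2]
    have hA : (0:ℝ) < Real.exp (-x) := Real.exp_pos _
    nlinarith [mul_le_mul_of_nonneg_left hsq hA.le]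
end

section
/- Let p, q be real numbers with 1 < q ≤ 2 ≤ p and 1/p + 1/q = 1. Let V ∈ ℂ with V ≠ 0 and set W = ‖V‖^{p−2} · (i·V) (real scalar multiplication by the real power ‖V‖^{p−2}, followed by multiplication by the imaginary unit i). Then ‖W‖^{q−2} · (i·W) = −V. -/
/-- pointwise duality, Lemma 3.2 of the paper: for conjugate
exponents `1 < q ≤ 2 ≤ p` with `1/p + 1/q = 1`, and `V ∈ ℂ` nonzero, setting
`W = ‖V‖^(p-2) • (i V)` (Hodge star = multiplication by `i`), one has
`‖W‖^(q-2) • (i W) = -V`. Powers of norms are real powers. -/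
theorem conjugate_hodge_duality (p q : ℝ) (hq : 1 < q) (hq2 : q ≤ 2) (hp : 2 ≤ p)
    (hpq : 1 / p + 1 / q = 1) (V : ℂ) (hV : V ≠ 0) :
    ‖(‖V‖ ^ (p - 2) : ℝ) • (Complex.I * V)‖ ^ (q - 2) •
        (Complex.I * ((‖V‖ ^ (p - 2) : ℝ) • (Complex.I * V))) = -V := by
  have hr : (0:ℝ) < ‖V‖ := norm_pos_iff.mpr hV
  have hp0 : p ≠ 0 := by linarith
  have hq0 : q ≠ 0 := by linarith
  -- exponent identity: (p-1)*(q-2) + (p-2) = 0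
  have hexp : (p - 1) * (q - 2) = -(p - 2) := by
    field_simp at hpq
    nlinarith [hpq]
  have hnorm : ‖(‖V‖ ^ (p - 2) : ℝ) • (Complex.I * V)‖ = ‖V‖ ^ (p - 1) := by
    rw [norm_smul, norm_mul, Complex.norm_I, one_mul,
      Real.norm_eq_abs, abs_of_pos (Real.rpow_pos_of_pos hr _)]
    nth_rewrite 2 [← Real.rpow_one ‖V‖]
    rw [← Real.rpow_add hr]
    ring_nf
  rw [hnorm, ← Real.rpow_mul hr.le, hexp]
  have : Complex.I * ((‖V‖ ^ (p - 2) : ℝ) • (Complex.I * V)) =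
      (‖V‖ ^ (p - 2) : ℝ) • (-V) := by
    rw [Complex.real_smul, Complex.real_smul]
    ring_nf
    rw [Complex.I_sq]
    ring
  rw [this, smul_smul, ← Real.rpow_add hr]
  norm_num
end

section
/- Let α be a real number with 0 < α < 1 and let T > 0. Then for every t with 0 < t ≤ T, (T/\sinh T)^α · t^{1−α}/(1−α) ≤ ∫_0^t (\sinh s)^{−α} ds ≤ t^{1−α}/(1−α). -/
open Real MeasureTheory intervalIntegral

set_option maxHeartbeats 1000000

lemma convexOn_sinh_Ici : ConvexOn ℝ (Set.Ici (0:ℝ)) Real.sinh := by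
  apply convexOn_of_deriv2_nonneg (convex_Ici 0) Real.continuous_sinh.continuousOn
    Real.differentiable_sinh.differentiableOn
  · rw [Real.deriv_sinh]; exact Real.differentiable_cosh.differentiableOn
  · intro x hx
    rw [interior_Ici, Set.mem_Ioi] at hx
    simp only [Function.iterate_succ, Function.iterate_zero, Function.comp_apply, id_eq,
      Real.deriv_sinh, Real.deriv_cosh]
    exact (Real.sinh_pos_iff.mpr hx).le

lemma sinh_le_mul {T s : ℝ} (hT : 0 < T) (hs : 0 ≤ s) (hsT : s ≤ T) :
    Real.sinh s ≤ s * (Real.sinh T / T) := by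
  have ha : (0:ℝ) ≤ 1 - s / T := by
    have : s / T ≤ 1 := (div_le_one hT).mpr hsT
    linarith
  have hb : (0:ℝ) ≤ s / T := div_nonneg hs hT.le
  have hab : (1 - s / T) + s / T = 1 := by ring
  have h := convexOn_sinh_Ici.2 (Set.self_mem_Ici (a := (0:ℝ)))
      (Set.mem_Ici.mpr hT.le) ha hb hab
  have hst : (1 - s / T) • (0:ℝ) + (s / T) • T = s := by
    rw [smul_eq_mul, smul_eq_mul, mul_zero, zero_add, div_mul_cancel₀ s hT.ne']
  rw [hst] at h
  calc Real.sinh s ≤ (1 - s / T) • Real.sinh 0 + (s / T) • Real.sinh T := h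
    _ = s * (Real.sinh T / T) := by rw [Real.sinh_zero, smul_zero, zero_add, smul_eq_mul]; ring

/-- estimate from Lemma 5.5 of the paper: for `0 < α < 1`,
`T > 0` and `0 < t ≤ T`,
`(T/sinh T)^α · t^(1-α)/(1-α) ≤ ∫_0^t (sinh s)^(-α) ds ≤ t^(1-α)/(1-α)`.
Powers are real powers. -/
theorem sinh_rpow_integral_estimate (α T : ℝ) (hα0 : 0 < α) (hα1 : α < 1)
    (hT : 0 < T) (t : ℝ) (ht0 : 0 < t) (htT : t ≤ T) :
    ((T / Real.sinh T) ^ α * t ^ (1 - α) / (1 - α) ≤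
        ∫ s in (0 : ℝ)..t, Real.sinh s ^ (-α)) ∧
      (∫ s in (0 : ℝ)..t, Real.sinh s ^ (-α)) ≤ t ^ (1 - α) / (1 - α) := by
  have hα1' : (0:ℝ) < 1 - α := by linarith
  have hexp : -1 < -α := by linarith
  have hsT : 0 < Real.sinh T := Real.sinh_pos_iff.mpr hT
  -- pointwise upper bound
  have hub : ∀ s ∈ Set.Icc (0:ℝ) t, Real.sinh s ^ (-α) ≤ s ^ (-α) := by
    intro s hs
    rcases eq_or_lt_of_le hs.1 with h0 | h0
    · simp [← h0, Real.zero_rpow (by linarith : -α ≠ 0)]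
    · exact Real.rpow_le_rpow_of_nonpos h0 (Real.self_le_sinh_iff.mpr h0.le) (by linarith)
  -- rewrite the constant
  have hconst : (T / Real.sinh T) ^ α = (Real.sinh T / T) ^ (-α) := by
    rw [← inv_div, Real.inv_rpow (by positivity), ← Real.rpow_neg (by positivity)]
  -- pointwise lower bound
  have hlb : ∀ s ∈ Set.Icc (0:ℝ) t,
      (T / Real.sinh T) ^ α * s ^ (-α) ≤ Real.sinh s ^ (-α) := by
    intro s hs
    rcases eq_or_lt_of_le hs.1 with h0 | h0
    · simp [← h0, Real.zero_rpow (by linarith : -α ≠ 0)]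
    · have h1 : Real.sinh s ≤ s * (Real.sinh T / T) := sinh_le_mul hT h0.le (hs.2.trans htT)
      have h2 : (s * (Real.sinh T / T)) ^ (-α) ≤ Real.sinh s ^ (-α) :=
        Real.rpow_le_rpow_of_nonpos (Real.sinh_pos_iff.mpr h0) h1 (by linarith)
      calc (T / Real.sinh T) ^ α * s ^ (-α)
          = (s * (Real.sinh T / T)) ^ (-α) := by
            rw [hconst, Real.mul_rpow h0.le (by positivity), mul_comm]
        _ ≤ Real.sinh s ^ (-α) := h2
  -- integrability
  have hmeas : IntervalIntegrable (fun s : ℝ => s ^ (-α)) volume 0 t :=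
    intervalIntegral.intervalIntegrable_rpow' hexp
  have hint : IntervalIntegrable (fun s => Real.sinh s ^ (-α)) volume 0 t := by
    apply hmeas.mono_fun
    · have huIoc : Set.uIoc (0:ℝ) t = Set.Ioc 0 t := Set.uIoc_of_le ht0.le
      have hcont : ContinuousOn (fun s => Real.sinh s ^ (-α)) (Set.Ioc 0 t) :=
        Real.continuous_sinh.continuousOn.rpow_const
          (fun x hx => Or.inl (Real.sinh_pos_iff.mpr hx.1).ne')
      rw [huIoc]
      exact hcont.aestronglyMeasurable measurableSet_Ioc
    · filter_upwards [ae_restrict_mem measurableSet_uIoc] with s hs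
      rw [Set.uIoc_of_le ht0.le] at hs
      have h1 : (0:ℝ) ≤ Real.sinh s ^ (-α) :=
        Real.rpow_nonneg (Real.sinh_nonneg_iff.mpr hs.1.le) _
      have h2 : (0:ℝ) ≤ s ^ (-α) := Real.rpow_nonneg hs.1.le _
      rw [Real.norm_eq_abs, Real.norm_eq_abs, abs_of_nonneg h1, abs_of_nonneg h2]
      exact hub s ⟨hs.1.le, hs.2⟩
  -- value of ∫ s^(-α)
  have hval : (∫ s in (0:ℝ)..t, s ^ (-α)) = t ^ (1 - α) / (1 - α) := by
    rw [integral_rpow (Or.inl hexp), Real.zero_rpow (by linarith : -α + 1 ≠ 0)]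
    ring_nf
  constructor
  · have h := intervalIntegral.integral_mono_on ht0.le
      (hmeas.const_mul ((T / Real.sinh T) ^ α)) hint hlb
    rw [intervalIntegral.integral_const_mul, hval] at h
    calc (T / Real.sinh T) ^ α * t ^ (1 - α) / (1 - α)
        = (T / Real.sinh T) ^ α * (t ^ (1 - α) / (1 - α)) := by ring
      _ ≤ _ := h
  · have h := intervalIntegral.integral_mono_on ht0.le hint hmeas hub
    rwa [hval] at h
end

section
/- Fix an integer n ≥ 2 and a real T > 0. For each real p > n define f_p : [0,T] → ℝ by f_p(t) = ∫_0^t (\sinh s)^{−(n−1)/(p−1)} ds. Then f_p converges uniformly on [0,T] to the identity function t ↦ t as p → +∞. -/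
open Filter MeasureTheory intervalIntegral

private lemma cone_key (T : ℝ) (hT : 0 < T) (δ : ℝ) (hδ0 : 0 < δ) (hδ1 : δ ≤ 1)
    (ε : ℝ) (hε0 : 0 < ε) (hε1 : ε ≤ 1/2) (t : ℝ) (ht : t ∈ Set.Icc (0:ℝ) T) :
    |t - ∫ s in (0:ℝ)..t, Real.sinh s ^ (-ε)| ≤
      T * |1 - Real.sinh T ^ (-ε)| + δ ^ (1-ε) / (1-ε) + T * (δ ^ (-ε) / (1-ε) - 1) := by
  obtain ⟨ht0, htT⟩ := ht
  have h1ε : (0:ℝ) < 1 - ε := by linarith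
  have hcpos : 0 < Real.sinh T := Real.sinh_pos_iff.2 hT
  -- integrability
  have hrint : IntervalIntegrable (fun s : ℝ => s ^ (-ε)) volume 0 t :=
    intervalIntegrable_rpow' (by linarith)
  have hint : IntervalIntegrable (fun s : ℝ => Real.sinh s ^ (-ε)) volume 0 t := by
    have hm : Measurable (fun s : ℝ => Real.sinh s ^ (-ε)) := by fun_prop
    refine hrint.mono_fun' hm.aestronglyMeasurable ?_
    filter_upwards [ae_restrict_mem measurableSet_uIoc] with s hs
    rw [Set.uIoc_of_le ht0] at hs
    have hs0 : 0 < s := hs.1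
    have hsinh : s < Real.sinh s := Real.self_lt_sinh_iff.2 hs0
    have h5 : Real.sinh s ^ (-ε) ≤ s ^ (-ε) :=
      Real.rpow_le_rpow_of_nonpos hs0 hsinh.le (by linarith)
    have hnn : 0 ≤ Real.sinh s ^ (-ε) :=
      Real.rpow_nonneg (Real.sinh_nonneg_iff.2 hs0.le) _
    rw [Real.norm_eq_abs, abs_of_nonneg hnn]
    exact h5
  -- upper bound for the integral
  have hupper : (∫ s in (0:ℝ)..t, Real.sinh s ^ (-ε)) ≤ t ^ (1-ε) / (1-ε) := by
    have h1 : (∫ s in (0:ℝ)..t, Real.sinh s ^ (-ε)) ≤ ∫ s in (0:ℝ)..t, s ^ (-ε) := by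
      refine integral_mono_on ht0 hint hrint fun s hs => ?_
      rcases eq_or_lt_of_le hs.1 with h | h
      · simp [← h]
      · exact Real.rpow_le_rpow_of_nonpos h (Real.self_lt_sinh_iff.2 h).le (by linarith)
    have h2 : (∫ s in (0:ℝ)..t, s ^ (-ε)) = t ^ (1-ε) / (1-ε) := by
      rw [integral_rpow (Or.inl (by linarith))]
      rw [Real.zero_rpow (by linarith : -ε + 1 ≠ 0)]
      ring_nf
    linarith [h1, h2.le, h2.ge]
  -- lower bound for the integral
  have hlower : t * Real.sinh T ^ (-ε) ≤ ∫ s in (0:ℝ)..t, Real.sinh s ^ (-ε) := by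
    have hconst : (∫ _ in (0:ℝ)..t, Real.sinh T ^ (-ε)) = t * Real.sinh T ^ (-ε) := by
      simp [mul_comm]
    rw [← hconst]
    refine integral_mono_ae_restrict ht0 (intervalIntegrable_const) hint ?_
    have hne : ∀ᵐ s : ℝ, s ≠ 0 := by
      have h0 : volume ({0} : Set ℝ) = 0 := Real.volume_singleton
      rw [ae_iff]
      simpa [Set.setOf_eq_eq_singleton] using h0
    filter_upwards [ae_restrict_mem measurableSet_Icc, ae_restrict_of_ae hne] with s hs hs0
    have hspos : 0 < s := lt_of_le_of_ne hs.1 (Ne.symm hs0)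
    have h1 : Real.sinh s ≤ Real.sinh T := Real.sinh_le_sinh.2 (le_trans hs.2 htT)
    exact Real.rpow_le_rpow_of_nonpos (Real.sinh_pos_iff.2 hspos) h1 (by linarith)
  -- nonnegativity of the three terms
  have hterm1 : 0 ≤ T * |1 - Real.sinh T ^ (-ε)| := by positivity
  have hterm2 : 0 ≤ δ ^ (1-ε) / (1-ε) := by positivity
  have hδε1 : (1:ℝ) ≤ δ ^ (-ε) := by
    have := Real.rpow_le_rpow_of_nonpos hδ0 hδ1 (by linarith : -ε ≤ 0)
    simpa using this
  have hterm3 : 0 ≤ T * (δ ^ (-ε) / (1-ε) - 1) := by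
    have : (1:ℝ) ≤ δ ^ (-ε) / (1-ε) := by
      rw [le_div_iff₀ h1ε]; nlinarith
    nlinarith
  rw [abs_le]
  constructor
  · -- -(G) ≤ t - ∫ , i.e. ∫ - t ≤ G
    have hcase : (∫ s in (0:ℝ)..t, Real.sinh s ^ (-ε)) - t ≤
        δ ^ (1-ε) / (1-ε) + T * (δ ^ (-ε) / (1-ε) - 1) := by
      rcases le_total t δ with h | h
      · have htδ : t ^ (1-ε) ≤ δ ^ (1-ε) := Real.rpow_le_rpow ht0 h (by linarith)
        have hdd : t ^ (1-ε) / (1-ε) ≤ δ ^ (1-ε) / (1-ε) := by gcongr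
        linarith [hupper, hdd, hterm3]
      · have htpos : 0 < t := lt_of_lt_of_le hδ0 h
        have hsplit : t ^ (1-ε) = t * t ^ (-ε) := by
          rw [show (1:ℝ) - ε = 1 + -ε by ring, Real.rpow_add htpos, Real.rpow_one]
        have htδ : t ^ (-ε) ≤ δ ^ (-ε) :=
          Real.rpow_le_rpow_of_nonpos hδ0 h (by linarith)
        have h3 : t ^ (1-ε) / (1-ε) - t ≤ t * (δ ^ (-ε) / (1-ε) - 1) := by
          rw [hsplit, mul_div_assoc, mul_sub, mul_one]
          have hdd : t * (t ^ (-ε) / (1-ε)) ≤ t * (δ ^ (-ε) / (1-ε)) := by gcongr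
          linarith
        have h4 : t * (δ ^ (-ε) / (1-ε) - 1) ≤ T * (δ ^ (-ε) / (1-ε) - 1) := by
          apply mul_le_mul_of_nonneg_right htT
          have : (1:ℝ) ≤ δ ^ (-ε) / (1-ε) := by rw [le_div_iff₀ h1ε]; nlinarith
          linarith
        nlinarith [hupper]
    linarith
  · -- t - ∫ ≤ G
    have h1 : t - (∫ s in (0:ℝ)..t, Real.sinh s ^ (-ε)) ≤ t * (1 - Real.sinh T ^ (-ε)) := by
      nlinarith [hlower]
    have h2 : t * (1 - Real.sinh T ^ (-ε)) ≤ T * |1 - Real.sinh T ^ (-ε)| := by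
      calc t * (1 - Real.sinh T ^ (-ε)) ≤ t * |1 - Real.sinh T ^ (-ε)| :=
            mul_le_mul_of_nonneg_left (le_abs_self _) ht0
        _ ≤ T * |1 - Real.sinh T ^ (-ε)| :=
            mul_le_mul_of_nonneg_right htT (abs_nonneg _)
    linarith

/-- Lemma 5.5 of the paper: for an integer `n ≥ 2` and `T > 0`,
the hyperbolic cone profiles `f_p(t) = ∫_0^t (sinh s)^(-(n-1)/(p-1)) ds`
converge uniformly on `[0,T]` to the identity as `p → +∞`. -/
theorem cone_profiles_tendstoUniformly (n : ℕ) (hn : 2 ≤ n) (T : ℝ) (hT : 0 < T) :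
    TendstoUniformlyOn
      (fun (p : ℝ) (t : ℝ) => ∫ s in (0 : ℝ)..t,
        Real.sinh s ^ (-(((n : ℝ) - 1) / (p - 1))))
      (fun t => t) atTop (Set.Icc (0 : ℝ) T) := by
  rw [Metric.tendstoUniformlyOn_iff]
  intro η hη
  set c := Real.sinh T with hc
  have hcpos : 0 < c := Real.sinh_pos_iff.2 hT
  set δ : ℝ := min 1 (η/2) with hδ
  have hδ0 : 0 < δ := lt_min one_pos (by linarith)
  have hδ1 : δ ≤ 1 := min_le_left _ _
  have hδη : δ < η := lt_of_le_of_lt (min_le_right _ _) (by linarith)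
  set G : ℝ → ℝ := fun ε => T * |1 - c ^ (-ε)| + δ ^ (1-ε) / (1-ε) + T * (δ ^ (-ε) / (1-ε) - 1)
    with hG
  -- ε p → 0
  have hεtendsto : Tendsto (fun p : ℝ => ((n:ℝ) - 1) / (p - 1)) atTop (nhds 0) := by
    apply Tendsto.div_atTop (tendsto_const_nhds)
    simpa [sub_eq_add_neg] using tendsto_atTop_add_const_right atTop (-1 : ℝ) tendsto_id
  -- G continuous at 0 with value δ
  have hGcont : ContinuousAt G 0 := by
    have h1 : ContinuousAt (fun ε : ℝ => c ^ (-ε)) 0 :=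
      (Real.continuousAt_const_rpow hcpos.ne').comp continuous_neg.continuousAt
    have h2 : ContinuousAt (fun ε : ℝ => δ ^ (1-ε)) 0 :=
      (Real.continuousAt_const_rpow hδ0.ne').comp (continuous_const.sub continuous_id).continuousAt
    have h3 : ContinuousAt (fun ε : ℝ => δ ^ (-ε)) 0 :=
      (Real.continuousAt_const_rpow hδ0.ne').comp continuous_neg.continuousAt
    have h4 : ContinuousAt (fun ε : ℝ => 1 - ε) 0 :=
      (continuous_const.sub continuous_id).continuousAt
    exact ((continuousAt_const.mul ((continuousAt_const.sub h1).abs)).add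
      (h2.div h4 (by norm_num))).add
      (continuousAt_const.mul ((h3.div h4 (by norm_num)).sub continuousAt_const))
  have hG0 : G 0 = δ := by
    simp [hG, Real.rpow_zero]
  have hGlim : Tendsto (fun p : ℝ => G (((n:ℝ) - 1) / (p - 1))) atTop (nhds δ) := by
    rw [← hG0]
    exact hGcont.tendsto.comp hεtendsto
  have hev1 : ∀ᶠ p : ℝ in atTop, G (((n:ℝ) - 1) / (p - 1)) < η :=
    hGlim.eventually_lt_const hδη
  have hev2 : ∀ᶠ p : ℝ in atTop, 0 < ((n:ℝ) - 1) / (p - 1) := by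
    filter_upwards [eventually_gt_atTop (1:ℝ)] with p hp
    have hn1 : (0:ℝ) < (n:ℝ) - 1 := by
      have : (2:ℝ) ≤ (n:ℝ) := by exact_mod_cast hn
      linarith
    exact div_pos hn1 (by linarith)
  have hev3 : ∀ᶠ p : ℝ in atTop, ((n:ℝ) - 1) / (p - 1) ≤ 1/2 :=
    (hεtendsto.eventually_le_const (by norm_num : (0:ℝ) < 1/2)).mono fun p hp => hp
  filter_upwards [hev1, hev2, hev3] with p hp1 hp2 hp3 t ht
  rw [Real.dist_eq]
  calc |t - ∫ s in (0:ℝ)..t, Real.sinh s ^ (-(((n:ℝ) - 1) / (p - 1)))|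
      ≤ G (((n:ℝ) - 1) / (p - 1)) :=
        cone_key T hT δ hδ0 hδ1 _ hp2 hp3 t ht
    _ < η := hp1
end

section
/- Let E be a real inner product space, let p > 2 be real, and let a, b ∈ E with ‖b‖ ≤ 1 and ‖b‖² ≥ ‖a‖² + ‖a − b‖². Then ‖a‖^{p−2} ‖a − b‖² < 2/(p−2). -/
/-- pointwise estimate from Proposition 6.4 of the paper: in a
real inner product space, if `p > 2`, `‖b‖ ≤ 1` and
`‖b‖² ≥ ‖a‖² + ‖a − b‖²`, then `‖a‖^(p−2) ‖a − b‖² < 2/(p−2)`.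
Powers of norms by `p − 2` are real powers. -/
theorem norm_rpow_concentration {E : Type*} [NormedAddCommGroup E]
    [InnerProductSpace ℝ E] (p : ℝ) (hp : 2 < p) (a b : E) (hb : ‖b‖ ≤ 1)
    (h : ‖a‖ ^ 2 + ‖a - b‖ ^ 2 ≤ ‖b‖ ^ 2) :
    ‖a‖ ^ (p - 2) * ‖a - b‖ ^ 2 < 2 / (p - 2) := by
  set t := ‖a‖ with ht
  have hq : 0 < p - 2 := by linarith
  have ht0 : 0 ≤ t := norm_nonneg a
  have hb0 : 0 ≤ ‖b‖ := norm_nonneg b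
  have hd0 : 0 ≤ ‖a - b‖ ^ 2 := sq_nonneg _
  have hd : ‖a - b‖ ^ 2 ≤ 1 - t ^ 2 := by nlinarith
  rcases eq_or_lt_of_le ht0 with h0 | h0
  · rw [← h0, Real.zero_rpow (by linarith : p - 2 ≠ 0), zero_mul]
    positivity
  · have ht1 : t ≤ 1 := by nlinarith
    have key : t ^ (p - 2) * (1 - t ^ 2) < 2 / (p - 2) := by
      have hlog : 1 - t ^ 2 ≤ -2 * Real.log t := by
        have h2 := Real.log_le_sub_one_of_pos (show (0:ℝ) < t ^ 2 by positivity)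
        rw [Real.log_pow] at h2
        push_cast at h2
        linarith
      set s := t ^ (p - 2) with hs
      have hs0 : 0 < s := Real.rpow_pos_of_pos h0 _
      have hs1 : s ≤ 1 := Real.rpow_le_one ht0 ht1 (le_of_lt hq)
      have hsl : Real.log s = (p - 2) * Real.log t := Real.log_rpow h0 _
      have hkey : s * (-Real.log s) < 1 := by
        rcases eq_or_lt_of_le hs1 with h1 | h1
        · simp [h1]
        · have h3 := Real.log_le_sub_one_of_pos (show (0:ℝ) < 1 / s by positivity)
          rw [Real.log_div one_ne_zero (ne_of_gt hs0), Real.log_one] at h3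
          have h4 : s * (-Real.log s) ≤ s * (1 / s - 1) :=
            mul_le_mul_of_nonneg_left (by linarith) (le_of_lt hs0)
          have h5 : s * (1 / s - 1) = 1 - s := by field_simp
          linarith
      have step1 : s * (1 - t ^ 2) ≤ s * (-2 * Real.log t) :=
        mul_le_mul_of_nonneg_left hlog (le_of_lt hs0)
      have step2 : s * (-2 * Real.log t) = (2 / (p - 2)) * (s * (-Real.log s)) := by
        rw [hsl]; field_simp
      calc s * (1 - t ^ 2) ≤ (2 / (p - 2)) * (s * (-Real.log s)) := by
              rw [← step2]; exact step1
        _ < (2 / (p - 2)) * 1 := by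
              exact mul_lt_mul_of_pos_left hkey (by positivity)
        _ = 2 / (p - 2) := mul_one _
    calc t ^ (p - 2) * ‖a - b‖ ^ 2 ≤ t ^ (p - 2) * (1 - t ^ 2) :=
          mul_le_mul_of_nonneg_left hd (Real.rpow_nonneg ht0 _)
      _ < 2 / (p - 2) := key
end

section
/- Let X be a metric space, x₀ ∈ X, R > 0, and let u : X → ℝ be continuous and bounded above on the closed ball of radius R about x₀. Assume the sphere S(x₀,r) = {x : dist(x,x₀) = r} is nonempty for every r ∈ (0,R], and that u satisfies comparison with cones from above on B(x₀,R): for every r ∈ (0,R] and all reals A, B, if u(x) ≤ A + B·dist(x,x₀) for every x with dist(x,x₀) = r and also u(x₀) ≤ A, then u(x) ≤ A + B·dist(x,x₀) for every x with dist(x,x₀) ≤ r. Then the function r ↦ (sup{ u(x) : dist(x,x₀) = r } − u(x₀))/r is monotone nondecreasing on (0,R]. -/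
open Metric Set

/-- Corollary 5.8 of the paper: if `u` is continuous, bounded
above on the closed ball `B(x₀,R)`, all spheres `S(x₀,r)`, `0 < r ≤ R`, are
nonempty, and `u` satisfies comparison with cones from above on `B(x₀,R)`,
then `r ↦ (sup_{S(x₀,r)} u − u(x₀))/r` is nondecreasing on `(0,R]`. -/
theorem maxSlope_monotone_of_comparisonWithCones {X : Type*} [MetricSpace X]
    (x₀ : X) (R : ℝ) (hR : 0 < R) (u : X → ℝ) (hu : Continuous u)
    (hbdd : BddAbove (u '' closedBall x₀ R))
    (hsph : ∀ r ∈ Ioc (0 : ℝ) R, (sphere x₀ r).Nonempty)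
    (hcone : ∀ r ∈ Ioc (0 : ℝ) R, ∀ A B : ℝ,
      (∀ x, dist x x₀ = r → u x ≤ A + B * dist x x₀) → u x₀ ≤ A →
        ∀ x, dist x x₀ ≤ r → u x ≤ A + B * dist x x₀) :
    MonotoneOn (fun r => (sSup (u '' sphere x₀ r) - u x₀) / r)
      (Ioc (0 : ℝ) R) := by
  intro r₁ hr₁ r₂ hr₂ h12
  obtain ⟨hr₁0, hr₁R⟩ := hr₁
  obtain ⟨hr₂0, hr₂R⟩ := hr₂
  set M₂ := sSup (u '' sphere x₀ r₂) with hM₂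
  set B := (M₂ - u x₀) / r₂ with hB
  have hb₂ : BddAbove (u '' sphere x₀ r₂) := hbdd.mono (by
    apply image_mono; intro x hx; simp only [mem_sphere] at hx
    simpa [mem_closedBall, hx] using hr₂R)
  have hb₁ : BddAbove (u '' sphere x₀ r₁) := hbdd.mono (by
    apply image_mono; intro x hx; simp only [mem_sphere] at hx
    simpa [mem_closedBall, hx] using le_trans h12 hr₂R)
  -- u ≤ u x₀ + B * dist on the ball of radius r₂
  have hcmp : ∀ x, dist x x₀ ≤ r₂ → u x ≤ u x₀ + B * dist x x₀ := by
    apply hcone r₂ ⟨hr₂0, hr₂R⟩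
    · intro x hx
      have hx' : u x ≤ M₂ := le_csSup hb₂ ⟨x, hx, rfl⟩
      have : u x₀ + B * dist x x₀ = M₂ := by
        rw [hx, hB]; field_simp; ring
      linarith
    · exact le_refl _
  -- bound the sup over sphere r₁
  have hsup₁ : sSup (u '' sphere x₀ r₁) ≤ u x₀ + B * r₁ := by
    apply csSup_le ((hsph r₁ ⟨hr₁0, hr₁R⟩).image u)
    rintro y ⟨x, hx, rfl⟩
    simp only [mem_sphere] at hx
    have := hcmp x (by rw [hx]; exact h12)
    rwa [hx] at this
  -- conclude
  have : (sSup (u '' sphere x₀ r₁) - u x₀) / r₁ ≤ B := by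
    rw [div_le_iff₀ hr₁0]
    have : B * r₁ = r₁ * B := mul_comm _ _
    linarith [hsup₁]
  simpa [hB] using this
end

section
/- Let X be a proper metric space (closed balls are compact), x₀ ∈ X, R > 0, L > 0, and let u : X → ℝ satisfy |u(x) − u(y)| ≤ L·dist(x,y) for all x, y. Assume: (a) the sphere S(x₀,r) = {x : dist(x,x₀) = r} is nonempty for every r ∈ (0,R]; (b) u satisfies comparison with cones from above on B(x₀,R), i.e. for every r ∈ (0,R] and all reals A, B, if u(x) ≤ A + B·dist(x,x₀) for every x with dist(x,x₀) = r and u(x₀) ≤ A, then u(x) ≤ A + B·dist(x,x₀) for every x with dist(x,x₀) ≤ r; (c) there is a sequence x_i → x₀ with x_i ≠ x₀ and (u(x_i) − u(x₀))/dist(x_i,x₀) → L. Then for every r ∈ (0,R] there exists a point x with dist(x,x₀) = r and u(x) = u(x₀) + L·r. -/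
open Metric Set Filter

/-- Proposition 5.9 of the paper, `+L` case: in a proper metric
space, if `u` is `L`-Lipschitz, satisfies comparison with cones from above on
`B(x₀,R)`, all spheres `S(x₀,r)` for `0 < r ≤ R` are nonempty, and the
Lipschitz constant `L` is attained infinitesimally at `x₀` along a sequence
`x_i → x₀`, then for every `r ∈ (0,R]` there is a point `x` with
`dist x x₀ = r` and `u x = u x₀ + L·r`. -/
theorem exists_cone_point_of_infinitesimal_stretch {X : Type*} [MetricSpace X]
    [ProperSpace X] (x₀ : X) (R L : ℝ) (hR : 0 < R) (hL : 0 < L) (u : X → ℝ)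
    (hlip : ∀ x y : X, |u x - u y| ≤ L * dist x y)
    (hsph : ∀ r ∈ Ioc (0 : ℝ) R, (sphere x₀ r).Nonempty)
    (hcone : ∀ r ∈ Ioc (0 : ℝ) R, ∀ A B : ℝ,
      (∀ x, dist x x₀ = r → u x ≤ A + B * dist x x₀) → u x₀ ≤ A →
        ∀ x, dist x x₀ ≤ r → u x ≤ A + B * dist x x₀)
    (x : ℕ → X) (hxne : ∀ i, x i ≠ x₀) (hx : Tendsto x atTop (nhds x₀))
    (hstretch : Tendsto (fun i => (u (x i) - u x₀) / dist (x i) x₀) atTop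
      (nhds L)) :
    ∀ r ∈ Ioc (0 : ℝ) R, ∃ y : X, dist y x₀ = r ∧ u y = u x₀ + L * r := by
  intro r hr
  obtain ⟨hr0, hrR⟩ := hr
  -- u is continuous
  have hu : Continuous u := by
    refine (LipschitzWith.continuous (K := L.toNNReal) ?_)
    intro a b
    rw [edist_dist, edist_dist, Real.dist_eq]
    have h := hlip a b
    have hLd : (L.toNNReal : ℝ) = L := Real.coe_toNNReal _ hL.le
    calc ENNReal.ofReal |u a - u b| ≤ ENNReal.ofReal (L * dist a b) :=
          ENNReal.ofReal_le_ofReal h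
      _ = ENNReal.ofReal L * ENNReal.ofReal (dist a b) := by
          rw [ENNReal.ofReal_mul hL.le]
      _ = (L.toNNReal : ENNReal) * ENNReal.ofReal (dist a b) := by
          rw [ENNReal.ofReal, ENNReal.ofReal]
  -- sphere is compact and nonempty; take max of u on it
  have hcm : IsCompact (sphere x₀ r) := isCompact_sphere x₀ r
  obtain ⟨y, hy, hymax⟩ :=
    hcm.exists_isMaxOn (hsph r ⟨hr0, hrR⟩) (hu.continuousOn)
  have hyd : dist y x₀ = r := hy
  set B : ℝ := (u y - u x₀) / r with hB
  have hBr : B * r = u y - u x₀ := div_mul_cancel₀ _ hr0.ne'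
  -- cone comparison with A = u x₀
  have hcc : ∀ z, dist z x₀ ≤ r → u z ≤ u x₀ + B * dist z x₀ := by
    refine hcone r ⟨hr0, hrR⟩ (u x₀) B ?_ le_rfl
    intro z hz
    have hzm : z ∈ sphere x₀ r := hz
    have h3 : u z ≤ u y := hymax hzm
    rw [hz, hBr]
    linarith
  -- L ≤ B
  have hLB : L ≤ B := by
    have hev : ∀ᶠ i in atTop, (u (x i) - u x₀) / dist (x i) x₀ ≤ B := by
      have hdist : Tendsto (fun i => dist (x i) x₀) atTop (nhds 0) := by
        simpa [dist_self] using hx.dist (tendsto_const_nhds (x := x₀))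
      filter_upwards [hdist.eventually_le_const hr0] with i hi
      have hdi : 0 < dist (x i) x₀ := dist_pos.mpr (hxne i)
      have := hcc (x i) hi
      rw [div_le_iff₀ hdi]
      linarith
    exact le_of_tendsto hstretch hev
  -- B ≤ L
  have hBL : B ≤ L := by
    have h := hlip y x₀
    have h2 : u y - u x₀ ≤ L * r := by
      rw [← hyd]; exact (le_abs_self _).trans h
    rw [hB, div_le_iff₀ hr0]
    linarith
  refine ⟨y, hyd, ?_⟩
  have hBLeq : B = L := le_antisymm hBL hLB
  have : u y - u x₀ = L * r := by rw [← hBr, hBLeq]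
  linarith
end
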